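/- Let ℬ be a ball-basis on (X, μ) and let r ≥ 0 and ϱ ≥ ρ > 0. The fractional maximal function 𝓜f(x) = sup_{B ∈ ℬ, x ∈ B} μ(B)^{−ρ} (∫_B ‖f‖_𝕌^r dμ)^ϱ satisfies the weak-type bound μ{x ∈ X : 𝓜f(x) > λ} ≤ (𝒦 / λ^{1/ρ}) (∫_X ‖f‖_𝕌^r dμ)^{ϱ/ρ} for all λ > 0. -/

import Mathlib

open MeasureTheory Set ENNReal NNReal

/-- A ball-basis on a measure space `(X, μ)`: a family of measurable sets of positive
finite measure satisfying conditions B1)-B4) of Karagulyan. -/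
structure BallBasis (X : Type*) [MeasurableSpace X] (μ : Measure X) where
  balls : Set (Set X)
  K : ℝ≥0
  K_pos : 0 < K
  measurableSet : ∀ B ∈ balls, MeasurableSet B
  measure_pos : ∀ B ∈ balls, 0 < μ B
  measure_lt_top : ∀ B ∈ balls, μ B < ∞
  exists_ball : ∀ x y : X, ∃ B ∈ balls, x ∈ B ∧ y ∈ B
  approx : ∀ E : Set X, MeasurableSet E → ∀ ε : ℝ≥0∞, 0 < ε →
      ∃ Bs : ℕ → Set X, (∀ k, Bs k ∈ balls) ∧ μ (symmDiff E (⋃ k, Bs k)) < ε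
  hull : Set X → Set X
  hull_mem : ∀ B ∈ balls, hull B ∈ balls
  star_subset_hull : ∀ B ∈ balls,
      (⋃₀ {A | A ∈ balls ∧ μ A ≤ 2 * μ B ∧ (A ∩ B).Nonempty}) ⊆ hull B
  measure_hull_le : ∀ B ∈ balls, μ (hull B) ≤ (K : ℝ≥0∞) * μ B

namespace BallBasis

variable {X : Type*} [MeasurableSpace X] {μ : Measure X}

/-- `B* = ⋃ {A ∈ ℬ : μ A ≤ 2 μ B, A ∩ B ≠ ∅}`. -/
def star (ℬ : BallBasis X μ) (B : Set X) : Set X :=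
  ⋃₀ {A | A ∈ ℬ.balls ∧ μ A ≤ 2 * μ B ∧ (A ∩ B).Nonempty}

/-- The doubling condition for a ball-basis, with doubling constant `η`. -/
def Doubling (ℬ : BallBasis X μ) (η : ℝ≥0) : Prop :=
  ∀ B ∈ ℬ.balls, ℬ.star B ≠ univ →
    ∃ B' ∈ ℬ.balls, B ⊂ B' ∧ μ B' ≤ (η : ℝ≥0∞) * μ B

end BallBasis

section Ops

variable {X : Type*} [MeasurableSpace X] {μ : Measure X}
variable {𝕌 : Type*} [NormedAddCommGroup 𝕌] {𝕍 : Type*} [NormedAddCommGroup 𝕍]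

/-- The fractional average `⟨f⟩_B = μ(B)^{-ρ} (∫_B ‖f‖^r)^ϱ`. -/
noncomputable def avg (μ : Measure X) (r ϱ ρ : ℝ) (f : X → 𝕌) (B : Set X) : ℝ≥0∞ :=
  (∫⁻ x in B, (‖f x‖₊ : ℝ≥0∞) ^ r ∂μ) ^ ϱ / (μ B) ^ ρ

/-- `⟨f⟩*_B = sup_{A ∈ ℬ, A ⊇ B} ⟨f⟩_A`. -/
noncomputable def avgStar {μ : Measure X} (ℬ : BallBasis X μ) (r ϱ ρ : ℝ)
    (f : X → 𝕌) (B : Set X) : ℝ≥0∞ :=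
  ⨆ A ∈ {A | A ∈ ℬ.balls ∧ B ⊆ A}, avg μ r ϱ ρ f A

/-- Essential oscillation `OSC_B(g) = esssup_{x,x' ∈ B} ‖g x - g x'‖`. -/
noncomputable def osc (μ : Measure X) (B : Set X) (g : X → 𝕍) : ℝ≥0∞ :=
  ⨅ (N : Set X) (_ : μ N = 0),
    ⨆ (x : X) (_ : x ∈ B \ N) (y : X) (_ : y ∈ B \ N), (‖g x - g y‖₊ : ℝ≥0∞)

/-- The fractional maximal function `𝓜 f(x) = sup_{B ∋ x} ⟨f⟩_B`. -/
noncomputable def maxFn {μ : Measure X} (ℬ : BallBasis X μ) (r ϱ ρ : ℝ)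
    (f : X → 𝕌) (x : X) : ℝ≥0∞ :=
  ⨆ B ∈ {B | B ∈ ℬ.balls ∧ x ∈ B}, avg μ r ϱ ρ f B

/-- Sublinearity of an operator. -/
def Sublinear (T : (X → 𝕌) → X → 𝕍) : Prop :=
  ∀ f g : X → 𝕌, ∀ x : X, ‖T (f + g) x‖ ≤ ‖T f x‖ + ‖T g x‖

/-- T0): weak type inequality with constant `L₀`. -/
def CondT0 {μ : Measure X} (ℬ : BallBasis X μ) (r ϱ ρ : ℝ)
    (T : (X → 𝕌) → X → 𝕍) (L₀ : ℝ≥0) : Prop :=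
  ∀ f : X → 𝕌, ∀ B ∈ ℬ.balls, ∀ lam : ℝ≥0∞, 0 < lam →
    μ {x | x ∈ B ∧ lam * avg μ r ϱ ρ f B < (‖T (B.indicator f) x‖₊ : ℝ≥0∞)} ≤
      ((L₀ : ℝ≥0∞) / lam) ^ (1 / ρ) * μ B

/-- T1): localization with constant `L₁`. -/
def CondT1 {μ : Measure X} (ℬ : BallBasis X μ) (r ϱ ρ : ℝ)
    (T : (X → 𝕌) → X → 𝕍) (L₁ : ℝ≥0) : Prop :=
  ∀ f : X → 𝕌, ∀ B ∈ ℬ.balls,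
    osc μ B (T ((ℬ.star B)ᶜ.indicator f)) ≤ (L₁ : ℝ≥0∞) * avgStar ℬ r ϱ ρ f B

/-- T2): connectivity with constant `L₂`. -/
def CondT2 {μ : Measure X} (ℬ : BallBasis X μ) (r ϱ ρ : ℝ)
    (T : (X → 𝕌) → X → 𝕍) (L₂ : ℝ≥0) : Prop :=
  ∀ A ∈ ℬ.balls, ℬ.star A ≠ univ → ∃ B ∈ ℬ.balls, A ⊂ B ∧ ∀ f : X → 𝕌,
    essSup (fun x => (‖T ((ℬ.star B \ ℬ.star A).indicator f) x‖₊ : ℝ≥0∞)) (μ.restrict A) ≤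
      (L₂ : ℝ≥0∞) * avg μ r ϱ ρ f (ℬ.star B)

/-- A bounded oscillation (BO) operator with constants `L₀, L₁, L₂`. -/
structure IsBO {μ : Measure X} (ℬ : BallBasis X μ) (r ϱ ρ : ℝ)
    (T : (X → 𝕌) → X → 𝕍) (L₀ L₁ L₂ : ℝ≥0) : Prop where
  sublinear : Sublinear T
  t0 : CondT0 ℬ r ϱ ρ T L₀
  t1 : CondT1 ℬ r ϱ ρ T L₁
  t2 : CondT2 ℬ r ϱ ρ T L₂

/-- `Δ(A,B) = sup_{x ∈ A, f ≠ 0} ‖T(f·1_{B*∖A*})(x)‖ / ⟨f⟩_{B*}`. -/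
noncomputable def Delta {μ : Measure X} (ℬ : BallBasis X μ) (r ϱ ρ : ℝ)
    (T : (X → 𝕌) → X → 𝕍) (A B : Set X) : ℝ≥0∞ :=
  ⨆ (f : X → 𝕌) (x : X) (_ : x ∈ A),
    (‖T ((ℬ.star B \ ℬ.star A).indicator f) x‖₊ : ℝ≥0∞) / avg μ r ϱ ρ f (ℬ.star B)

/-- A `γ`-ball: a set sandwiched between two balls of comparable measure. -/
def IsGammaBall {μ : Measure X} (ℬ : BallBasis X μ) (γ : ℝ≥0) (E : Set X) : Prop :=
  ∃ B₁ ∈ ℬ.balls, ∃ B₂ ∈ ℬ.balls, B₁ ⊆ E ∧ E ⊆ B₂ ∧ μ B₂ ≤ (γ : ℝ≥0∞) * μ B₁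

/-- The truncated operator `T* f(x) = sup_{B ∋ x} ‖T(f·1_{X∖B*})(x)‖`, ENNReal-valued. -/
noncomputable def TstarE {μ : Measure X} (ℬ : BallBasis X μ)
    (T : (X → 𝕌) → X → 𝕍) (f : X → 𝕌) (x : X) : ℝ≥0∞ :=
  ⨆ B ∈ {B | B ∈ ℬ.balls ∧ x ∈ B}, (‖T ((ℬ.star B)ᶜ.indicator f) x‖₊ : ℝ≥0∞)

/-- `φ(A) = inf {μ B : B ∈ ℬ, B ⊋ A}`. -/
noncomputable def phi {μ : Measure X} (ℬ : BallBasis X μ) (A : Set X) : ℝ≥0∞ :=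
  ⨅ B ∈ {B | B ∈ ℬ.balls ∧ A ⊂ B}, μ B

end Ops


section AuxWeakType

open MeasureTheory Set

variable {α : Type*}

/-- Every family of sets contains a maximal pairwise disjoint subfamily: any nonempty
member of the family meets some member of the subfamily. -/
lemma exists_maximal_disjoint_family (𝒜 : Set (Set α)) :
    ∃ 𝒟, 𝒟 ⊆ 𝒜 ∧ 𝒟.PairwiseDisjoint id ∧
      ∀ B ∈ 𝒜, B.Nonempty → ∃ D ∈ 𝒟, ¬ Disjoint B D := by
  obtain ⟨m, hm⟩ := zorn_subset {𝒟 | 𝒟 ⊆ 𝒜 ∧ 𝒟.PairwiseDisjoint id} (by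
    intro c hc hchain
    refine ⟨⋃₀ c, ⟨?_, ?_⟩, fun s hs => subset_sUnion_of_mem hs⟩
    · exact sUnion_subset fun t ht => (hc ht).1
    · intro x hx y hy hxy
      obtain ⟨t, htc, hxt⟩ := hx
      obtain ⟨t', htc', hyt⟩ := hy
      rcases hchain.total htc htc' with h | h
      · exact (hc htc').2 (h hxt) hyt hxy
      · exact (hc htc).2 hxt (h hyt) hxy)
  refine ⟨m, hm.prop.1, hm.prop.2, ?_⟩
  intro B hB hBne
  by_contra h
  push_neg at h
  have hmem : m ∪ {B} ∈ {𝒟 | 𝒟 ⊆ 𝒜 ∧ 𝒟.PairwiseDisjoint id} := by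
    constructor
    · exact union_subset hm.prop.1 (by simpa using hB)
    · intro x hx y hy hxy
      rcases hx with hx | hx <;> rcases hy with hy | hy
      · exact hm.prop.2 hx hy hxy
      · simp only [mem_singleton_iff] at hy; subst hy
        exact (h x hx).symm
      · simp only [mem_singleton_iff] at hx; subst hx
        exact h y hy
      · simp only [mem_singleton_iff] at hx hy
        exact absurd (hx.trans hy.symm) hxy
  have hBm : B ∈ m := hm.2 hmem subset_union_left (Or.inr rfl)
  exact hBne.not_subset_empty (disjoint_self.mp (h B hBm)).subset

/-- `∑ aᵢ^p ≤ (∑ aᵢ)^p` for `p ≥ 1` when the total sum is finite. -/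
lemma tsum_rpow_le_rpow_tsum {ι : Type*} (a : ι → ℝ≥0∞) {p : ℝ} (hp : 1 ≤ p)
    (hS : ∑' i, a i ≠ ⊤) : ∑' i, a i ^ p ≤ (∑' i, a i) ^ p := by
  set S := ∑' i, a i with hSdef
  have hp0 : (0:ℝ) < p := lt_of_lt_of_le one_pos hp
  have hterm : ∀ i, a i ^ p ≤ S ^ (p - 1) * a i := by
    intro i
    rcases eq_or_ne (a i) 0 with h0 | h0
    · simp [h0, ENNReal.zero_rpow_of_pos hp0]
    · have hle : a i ≤ S := ENNReal.le_tsum i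
      have hne : a i ≠ ⊤ := ne_top_of_le_ne_top hS hle
      calc a i ^ p = a i ^ (p - 1) * a i := by
            rw [show p = (p - 1) + 1 by ring, ENNReal.rpow_add _ _ h0 hne, ENNReal.rpow_one,
              show p - 1 + 1 - 1 = p - 1 by ring]
        _ ≤ S ^ (p - 1) * a i :=
            mul_le_mul_left (ENNReal.rpow_le_rpow hle (by linarith)) _
  calc ∑' i, a i ^ p ≤ ∑' i, S ^ (p - 1) * a i := ENNReal.tsum_le_tsum hterm
    _ = S ^ (p - 1) * S := by rw [ENNReal.tsum_mul_left]
    _ ≤ S ^ p := by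
        rcases eq_or_ne S 0 with h0 | h0
        · simp [h0]
        · rw [show p = (p - 1) + 1 by ring, ENNReal.rpow_add _ _ h0 hS, ENNReal.rpow_one,
            show p - 1 + 1 - 1 = p - 1 by ring]

/-- A pairwise disjoint family of measurable sets, each carrying integral at least `c > 0`,
is finite if the total integral is finite. -/
lemma finite_of_disjoint_lintegral {X : Type*} [MeasurableSpace X] {μ : Measure X}
    (g : X → ℝ≥0∞) (𝒟 : Set (Set X)) (hd : 𝒟.PairwiseDisjoint id)
    (hm : ∀ D ∈ 𝒟, MeasurableSet D) {c : ℝ≥0∞} (hc : c ≠ 0)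
    (hcD : ∀ D ∈ 𝒟, c ≤ ∫⁻ x in D, g x ∂μ)
    (hI : ∫⁻ x, g x ∂μ ≠ ⊤) : 𝒟.Finite := by
  by_contra hinf
  replace hinf : 𝒟.Infinite := hinf
  have hcT : c ≠ ⊤ := by
    obtain ⟨D, hD⟩ := hinf.nonempty
    exact ne_top_of_le_ne_top hI ((hcD D hD).trans (setLIntegral_le_lintegral _ _))
  obtain ⟨N, hN⟩ := ENNReal.exists_nat_gt
    (show (∫⁻ x, g x ∂μ) / c ≠ ⊤ from (ENNReal.div_lt_top hI hc).ne)
  have hNc : ∫⁻ x, g x ∂μ < N * c := by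
    rwa [ENNReal.div_lt_iff (Or.inl hc) (Or.inl hcT)] at hN
  obtain ⟨t, hts, htc⟩ := hinf.exists_subset_card_eq N
  have hsum : (N : ℝ≥0∞) * c ≤ ∑ D ∈ t, ∫⁻ x in D, g x ∂μ := by
    calc (N : ℝ≥0∞) * c = ∑ _D ∈ t, c := by rw [Finset.sum_const, htc, nsmul_eq_mul]
      _ ≤ _ := Finset.sum_le_sum fun D hD => hcD D (hts hD)
  have hsum2 : ∑ D ∈ t, ∫⁻ x in D, g x ∂μ ≤ ∫⁻ x, g x ∂μ := by
    have heq := lintegral_biUnion_finset (μ := μ) (s := t) (t := id) (hd.subset hts)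
      (fun D hD => hm D (hts hD)) g
    simp only [id_eq] at heq
    rw [← heq]
    exact setLIntegral_le_lintegral _ _
  exact absurd (hsum.trans hsum2) hNc.not_ge

end AuxWeakType

/-- Weak-type bound for the fractional maximal function associated with a ball-basis. -/
theorem maxFn_weak_type {X : Type*} [MeasurableSpace X] {μ : Measure X}
    (ℬ : BallBasis X μ) {𝕌 : Type*} [NormedAddCommGroup 𝕌]
    (r ϱ ρ : ℝ) (hr : 0 ≤ r) (hρ : 0 < ρ) (hϱρ : ρ ≤ ϱ)
    (f : X → 𝕌) (lam : ℝ≥0∞) (hlam : 0 < lam) :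
    μ {x | lam < maxFn ℬ r ϱ ρ f x} ≤
      (ℬ.K : ℝ≥0∞) / lam ^ (1 / ρ) * (∫⁻ x, (‖f x‖₊ : ℝ≥0∞) ^ r ∂μ) ^ (ϱ / ρ) := by
  classical
  set I := ∫⁻ x, (‖f x‖₊ : ℝ≥0∞) ^ r ∂μ with hIdef
  have hϱ : (0:ℝ) < ϱ := lt_of_lt_of_le hρ hϱρ
  -- trivial case `lam = ⊤`
  rcases eq_or_ne lam ⊤ with rfl | hlamT
  · have hempty : {x | (⊤:ℝ≥0∞) < maxFn ℬ r ϱ ρ f x} = ∅ := by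
      ext x; simp
    rw [hempty]; simp
  have hlam0 : lam ≠ 0 := hlam.ne'
  -- trivial case `I = 0`
  rcases eq_or_ne I 0 with hI0 | hI0
  · have hempty : {x | lam < maxFn ℬ r ϱ ρ f x} = ∅ := by
      refine eq_empty_of_forall_notMem fun x hx => ?_
      simp only [mem_setOf_eq, maxFn, lt_iSup_iff] at hx
      obtain ⟨B, hBmem, hlt⟩ := hx
      have hJ : ∫⁻ y in B, (‖f y‖₊ : ℝ≥0∞) ^ r ∂μ = 0 :=
        le_antisymm (hI0 ▸ setLIntegral_le_lintegral _ _) (zero_le)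
      rw [avg, hJ, ENNReal.zero_rpow_of_pos hϱ, ENNReal.zero_div] at hlt
      exact ENNReal.not_lt_zero hlt
    rw [hempty]; simp
  -- trivial case `I = ⊤`
  rcases eq_or_ne I ⊤ with hIT | hIT
  · have h1 : (ℬ.K : ℝ≥0∞) / lam ^ (1/ρ) ≠ 0 := by
      have h2 : lam ^ (1/ρ) ≠ ⊤ :=
        (ENNReal.rpow_lt_top_of_nonneg (by positivity) hlamT).ne
      exact (ENNReal.div_pos (by exact_mod_cast ℬ.K_pos.ne') h2).ne'
    rw [hIT, ENNReal.top_rpow_of_pos (by positivity), ENNReal.mul_top h1]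
    exact le_top
  -- main case
  set C : Set (Set X) := {B | B ∈ ℬ.balls ∧ lam < avg μ r ϱ ρ f B} with hCdef
  have hCmem : ∀ B ∈ C, B ∈ ℬ.balls ∧ lam < avg μ r ϱ ρ f B := by
    intro B hB; rwa [hCdef] at hB
  have hCintro : ∀ B, B ∈ ℬ.balls → lam < avg μ r ϱ ρ f B → B ∈ C := by
    intro B h1 h2; rw [hCdef]; exact ⟨h1, h2⟩
  set M : ℝ≥0∞ := I ^ (ϱ/ρ) / lam ^ (1/ρ) with hMdef
  have hlamρT : lam ^ (1/ρ) ≠ ⊤ :=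
    (ENNReal.rpow_lt_top_of_nonneg (by positivity) hlamT).ne
  have hlamρ0 : lam ^ (1/ρ) ≠ 0 := (ENNReal.rpow_pos hlam hlamT).ne'
  have hIρ0 : I ^ (ϱ/ρ) ≠ 0 := (ENNReal.rpow_pos (pos_iff_ne_zero.mpr hI0) hIT).ne'
  have hIρT : I ^ (ϱ/ρ) ≠ ⊤ := (ENNReal.rpow_lt_top_of_nonneg (by positivity) hIT).ne
  have hM0 : M ≠ 0 := (ENNReal.div_pos hIρ0 hlamρT).ne'
  have hMT : M ≠ ⊤ := (ENNReal.div_lt_top hIρT hlamρ0).ne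
  -- the key pointwise estimates for balls in `C`
  have hball : ∀ B ∈ C, μ B < M ∧
      μ B ≤ (∫⁻ x in B, (‖f x‖₊ : ℝ≥0∞) ^ r ∂μ) ^ (ϱ/ρ) / lam ^ (1/ρ) ∧
      lam * (μ B) ^ ρ ≤ (∫⁻ x in B, (‖f x‖₊ : ℝ≥0∞) ^ r ∂μ) ^ ϱ := by
    intro B hB
    obtain ⟨hBb, hBl⟩ := hCmem B hB
    simp only [avg] at hBl
    set J := ∫⁻ x in B, (‖f x‖₊ : ℝ≥0∞) ^ r ∂μ with hJdef
    have hμpos := ℬ.measure_pos B hBb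
    have hμT := (ℬ.measure_lt_top B hBb).ne
    have hr0 : (μ B) ^ ρ ≠ 0 := (ENNReal.rpow_pos hμpos hμT).ne'
    have hrT : (μ B) ^ ρ ≠ ⊤ := (ENNReal.rpow_lt_top_of_nonneg hρ.le hμT).ne
    have h1 : lam * (μ B) ^ ρ < J ^ ϱ := by
      rwa [ENNReal.lt_div_iff_mul_lt (Or.inl hr0) (Or.inl hrT)] at hBl
    have h2 : (μ B) ^ ρ < J ^ ϱ / lam := by
      rw [ENNReal.lt_div_iff_mul_lt (Or.inl hlam0) (Or.inl hlamT)]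
      rwa [mul_comm] at h1
    have h3 : μ B < (J ^ ϱ / lam) ^ (1/ρ) := by
      have h := ENNReal.rpow_lt_rpow h2 (show (0:ℝ) < 1/ρ by positivity)
      rwa [← ENNReal.rpow_mul, mul_one_div, div_self hρ.ne', ENNReal.rpow_one] at h
    have h4 : (J ^ ϱ / lam) ^ (1/ρ) = J ^ (ϱ/ρ) / lam ^ (1/ρ) := by
      rw [ENNReal.div_rpow_of_nonneg _ _ (show (0:ℝ) ≤ 1/ρ by positivity),
        ← ENNReal.rpow_mul, mul_one_div]
    have h5 : μ B < J ^ (ϱ/ρ) / lam ^ (1/ρ) := h4 ▸ h3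
    refine ⟨h5.trans_le ?_, h5.le, h1.le⟩
    exact ENNReal.div_le_div_right
      (ENNReal.rpow_le_rpow (setLIntegral_le_lintegral _ _) (by positivity)) _
  -- the dyadic scale of a ball
  have hexist : ∀ B : Set X, ∃ n : ℕ, B ∈ C → M / 2 ^ (n+1) ≤ μ B := by
    intro B
    by_cases hB : B ∈ C
    · have hBb : B ∈ ℬ.balls := (hCmem B hB).1
      have hμ0 : μ B ≠ 0 := (ℬ.measure_pos B hBb).ne'
      have hμT : μ B ≠ ⊤ := (ℬ.measure_lt_top B hBb).ne
      obtain ⟨n, hn⟩ := ENNReal.exists_nat_gt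
        (show M / μ B ≠ ⊤ from (ENNReal.div_lt_top hMT hμ0).ne)
      refine ⟨n, fun _ => ?_⟩
      have h2n : (n : ℝ≥0∞) ≤ 2 ^ (n+1) := by
        have hnat : (n : ℕ) ≤ 2 ^ (n+1) :=
          le_trans (Nat.lt_two_pow_self (n := n)).le (Nat.pow_le_pow_right (by norm_num) (Nat.le_succ n))
        exact_mod_cast hnat
      have hlt : M / μ B < 2 ^ (n+1) := hn.trans_le h2n
      rw [ENNReal.div_lt_iff (Or.inl hμ0) (Or.inl hμT)] at hlt
      rw [ENNReal.div_le_iff_le_mul (Or.inl (pow_ne_zero _ two_ne_zero))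
        (Or.inl (ENNReal.pow_ne_top ENNReal.ofNat_ne_top))]
      rw [mul_comm] at hlt
      exact hlt.le
    · exact ⟨0, fun h => absurd h hB⟩
  obtain ⟨sc, hsc_le, hsc_lt⟩ : ∃ sc : Set X → ℕ,
      (∀ B ∈ C, M / 2 ^ (sc B + 1) ≤ μ B) ∧ ∀ B ∈ C, μ B < M / 2 ^ (sc B) := by
    refine ⟨fun B => Nat.find (hexist B), fun B hB => Nat.find_spec (hexist B) hB, ?_⟩
    intro B hB
    show μ B < M / 2 ^ (Nat.find (hexist B))
    rcases h : Nat.find (hexist B) with _ | m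
    · rw [pow_zero]
      simpa using (hball B hB).1
    · have hmin := Nat.find_min (hexist B) (m := m) (by rw [h]; omega)
      by_contra hge
      push_neg at hge
      exact hmin fun _ => hge
  -- maximal disjoint subfamilies
  obtain ⟨maxd, hmaxd_sub, hmaxd_dis, hmaxd_max⟩ :
      ∃ maxd : Set (Set X) → Set (Set X), (∀ 𝒜, maxd 𝒜 ⊆ 𝒜) ∧
        (∀ 𝒜, (maxd 𝒜).PairwiseDisjoint id) ∧
        ∀ 𝒜, ∀ B ∈ 𝒜, B.Nonempty → ∃ D ∈ maxd 𝒜, ¬ Disjoint B D := by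
    choose maxd h1 h2 h3 using fun 𝒜 : Set (Set X) => exists_maximal_disjoint_family 𝒜
    exact ⟨maxd, h1, h2, h3⟩
  -- the recursive selection
  let G : ℕ → Set (Set X) := fun n => Nat.rec (maxd {B | B ∈ C ∧ sc B = 0})
    (fun m Gm => Gm ∪ maxd {B | B ∈ C ∧ sc B = m + 1 ∧ ∀ D ∈ Gm, Disjoint B D}) n
  have hG0 : G 0 = maxd {B | B ∈ C ∧ sc B = 0} := rfl
  have hGs : ∀ m, G (m+1) =
      G m ∪ maxd {B | B ∈ C ∧ sc B = m + 1 ∧ ∀ D ∈ G m, Disjoint B D} := fun m => rfl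
  have hGmono : Monotone G := monotone_nat_of_le_succ fun n => by
    rw [hGs n]; exact subset_union_left
  have hGC : ∀ n, G n ⊆ C := by
    intro n; induction n with
    | zero => rw [hG0]; exact (hmaxd_sub _).trans fun B hB => hB.1
    | succ m ih => rw [hGs m]; exact union_subset ih ((hmaxd_sub _).trans fun B hB => hB.1)
  have hGsc : ∀ n, ∀ D ∈ G n, sc D ≤ n := by
    intro n; induction n with
    | zero => intro D hD; rw [hG0] at hD; exact le_of_eq (hmaxd_sub _ hD).2
    | succ m ih =>
      intro D hD; rw [hGs m] at hD
      rcases hD with hD | hD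
      · exact (ih D hD).trans (Nat.le_succ m)
      · exact le_of_eq (hmaxd_sub _ hD).2.1
  have hGdisj : ∀ n, (G n).PairwiseDisjoint id := by
    intro n; induction n with
    | zero => rw [hG0]; exact hmaxd_dis _
    | succ m ih =>
      rw [hGs m]
      intro x hx y hy hxy
      rcases hx with hx | hx <;> rcases hy with hy | hy
      · exact ih hx hy hxy
      · exact ((hmaxd_sub _ hy).2.2 x hx).symm
      · exact (hmaxd_sub _ hx).2.2 y hy
      · exact hmaxd_dis _ hx hy hxy
  set 𝒟 : Set (Set X) := ⋃ n, G n with h𝒟def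
  have h𝒟C : ∀ D ∈ 𝒟, D ∈ C := by
    intro D hD; rw [h𝒟def] at hD
    obtain ⟨n, hn⟩ := mem_iUnion.mp hD
    exact hGC n hn
  have h𝒟disj : 𝒟.PairwiseDisjoint id := by
    intro x hx y hy hxy
    rw [h𝒟def] at hx hy
    obtain ⟨m, hx⟩ := mem_iUnion.mp hx
    obtain ⟨n, hy⟩ := mem_iUnion.mp hy
    rcases le_total m n with h | h
    · exact hGdisj n (hGmono h hx) hy hxy
    · exact hGdisj m hx (hGmono h hy) hxy
  -- every ball of `C` meets a selected ball of comparable size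
  have hcover : ∀ B ∈ C, ∃ D ∈ G (sc B), ¬ Disjoint B D := by
    intro B hB
    refine Classical.byContradiction fun hcon => ?_
    push_neg at hcon
    have hBb := (hCmem B hB).1
    have hBne : B.Nonempty := nonempty_of_measure_ne_zero (ℬ.measure_pos B hBb).ne'
    rcases h : sc B with _ | m
    · obtain ⟨D, hD, hnd⟩ := hmaxd_max {B' | B' ∈ C ∧ sc B' = 0} B ⟨hB, h⟩ hBne
      exact hnd (hcon D (by rw [h, hG0]; exact hD))
    · obtain ⟨D, hD, hnd⟩ := hmaxd_max
        {B' | B' ∈ C ∧ sc B' = m + 1 ∧ ∀ D ∈ G m, Disjoint B' D} B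
        ⟨hB, h, fun D hDm => hcon D (by rw [h]; exact hGmono (Nat.le_succ m) hDm)⟩ hBne
      exact hnd (hcon D (by rw [h, hGs m]; exact mem_union_right _ hD))
  have hkey : ∀ B ∈ C, ∃ D ∈ 𝒟, B ⊆ ℬ.hull D := by
    intro B hB
    obtain ⟨D, hDG, hnd⟩ := hcover B hB
    have hDC : D ∈ C := hGC _ hDG
    have hscD : sc D ≤ sc B := hGsc _ _ hDG
    have h2 : μ B ≤ 2 * μ D := by
      have l0 : 2 * (M / 2 ^ (sc B + 1)) = M / 2 ^ (sc B) := by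
        rw [pow_succ', ← mul_div_assoc]
        exact ENNReal.mul_div_mul_left M _ two_ne_zero ENNReal.ofNat_ne_top
      have l2 : M / 2 ^ (sc B + 1) ≤ M / 2 ^ (sc D + 1) := by
        refine ENNReal.div_le_div_left ?_ M
        exact_mod_cast Nat.pow_le_pow_right (by norm_num) (by omega)
      calc μ B ≤ M / 2 ^ (sc B) := (hsc_lt B hB).le
        _ = 2 * (M / 2 ^ (sc B + 1)) := l0.symm
        _ ≤ 2 * (M / 2 ^ (sc D + 1)) := mul_le_mul_right l2 _
        _ ≤ 2 * μ D := mul_le_mul_right (hsc_le D hDC) _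
    refine ⟨D, by rw [h𝒟def]; exact mem_iUnion.mpr ⟨sc B, hDG⟩, ?_⟩
    refine subset_trans ?_ (ℬ.star_subset_hull D (hCmem D hDC).1)
    exact subset_sUnion_of_mem
      ⟨(hCmem B hB).1, h2, Set.not_disjoint_iff_nonempty_inter.mp hnd⟩
  -- each scale family is finite, hence the selection is countable
  have hGfin : ∀ n, (G n).Finite := by
    intro n
    have hMn0 : M / 2 ^ (n+1) ≠ 0 :=
      (ENNReal.div_pos hM0 (ENNReal.pow_ne_top ENNReal.ofNat_ne_top)).ne'
    have hMnT : M / 2 ^ (n+1) ≠ ⊤ :=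
      (ENNReal.div_lt_top hMT (pow_ne_zero _ two_ne_zero)).ne
    have hb0 : lam * (M / 2 ^ (n+1)) ^ ρ ≠ 0 :=
      (ENNReal.mul_pos hlam0 (ENNReal.rpow_pos (pos_iff_ne_zero.mpr hMn0) hMnT).ne').ne'
    have hbT : lam * (M / 2 ^ (n+1)) ^ ρ ≠ ⊤ :=
      ENNReal.mul_ne_top hlamT (ENNReal.rpow_lt_top_of_nonneg hρ.le hMnT).ne
    refine finite_of_disjoint_lintegral (μ := μ) (fun x => (‖f x‖₊ : ℝ≥0∞) ^ r) (G n)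
      (hGdisj n) (fun D hD => ℬ.measurableSet D (hCmem D (hGC n hD)).1)
      (c := (lam * (M / 2 ^ (n+1)) ^ ρ) ^ (1/ϱ))
      (ENNReal.rpow_pos (pos_iff_ne_zero.mpr hb0) hbT).ne' ?_ hIT
    intro D hD
    have hDC := hGC n hD
    have hμD : M / 2 ^ (n+1) ≤ μ D := by
      refine le_trans ?_ (hsc_le D hDC)
      refine ENNReal.div_le_div_left ?_ M
      exact_mod_cast Nat.pow_le_pow_right (by norm_num) (by have := hGsc n D hD; omega)
    have h1 : lam * (μ D) ^ ρ ≤ (∫⁻ x in D, (‖f x‖₊ : ℝ≥0∞) ^ r ∂μ) ^ ϱ :=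
      (hball D hDC).2.2
    have h2 : lam * (M / 2 ^ (n+1)) ^ ρ ≤ lam * (μ D) ^ ρ :=
      mul_le_mul_right (ENNReal.rpow_le_rpow hμD hρ.le) _
    have h3 := ENNReal.rpow_le_rpow (h2.trans h1) (show (0:ℝ) ≤ 1/ϱ by positivity)
    rwa [← ENNReal.rpow_mul, mul_one_div, div_self hϱ.ne', ENNReal.rpow_one] at h3
  have h𝒟cnt : 𝒟.Countable := by
    rw [h𝒟def]; exact countable_iUnion fun n => (hGfin n).countable
  haveI := h𝒟cnt.to_subtype
  -- the superlevel set is covered by the hulls of the selected balls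
  have hEsub : {x | lam < maxFn ℬ r ϱ ρ f x} ⊆ ⋃ D ∈ 𝒟, ℬ.hull D := by
    intro x hx
    simp only [mem_setOf_eq, maxFn, lt_iSup_iff] at hx
    obtain ⟨B, hBmem, hlt⟩ := hx
    obtain ⟨D, hD, hsub⟩ := hkey B (hCintro B hBmem.1 hlt)
    exact mem_biUnion hD (hsub hBmem.2)
  have hpd : Pairwise (Function.onFun Disjoint fun D : 𝒟 => (D : Set X)) := by
    intro i j hij
    exact h𝒟disj i.2 j.2 fun h => hij (Subtype.ext h)
  have hJsum : ∑' D : 𝒟, ∫⁻ x in (D : Set X), (‖f x‖₊ : ℝ≥0∞) ^ r ∂μ ≤ I := by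
    rw [← lintegral_iUnion (fun D : 𝒟 => ℬ.measurableSet _ (hCmem _ (h𝒟C _ D.2)).1) hpd]
    exact setLIntegral_le_lintegral _ _
  have hsum_rpow : ∑' D : 𝒟, (∫⁻ x in (D : Set X), (‖f x‖₊ : ℝ≥0∞) ^ r ∂μ) ^ (ϱ/ρ) ≤
      I ^ (ϱ/ρ) := by
    have hp1 : (1:ℝ) ≤ ϱ/ρ := by rw [le_div_iff₀ hρ]; linarith
    have hs := tsum_rpow_le_rpow_tsum
      (fun D : 𝒟 => ∫⁻ x in (D : Set X), (‖f x‖₊ : ℝ≥0∞) ^ r ∂μ) hp1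
      (ne_top_of_le_ne_top hIT hJsum)
    exact hs.trans (ENNReal.rpow_le_rpow hJsum (by positivity))
  calc μ {x | lam < maxFn ℬ r ϱ ρ f x}
      ≤ μ (⋃ D ∈ 𝒟, ℬ.hull D) := measure_mono hEsub
    _ ≤ ∑' D : 𝒟, μ (ℬ.hull D) := measure_biUnion_le μ h𝒟cnt _
    _ ≤ ∑' D : 𝒟, (ℬ.K : ℝ≥0∞) * μ D :=
        ENNReal.tsum_le_tsum fun D => ℬ.measure_hull_le D (hCmem _ (h𝒟C _ D.2)).1
    _ = (ℬ.K : ℝ≥0∞) * ∑' D : 𝒟, μ (D : Set X) := ENNReal.tsum_mul_left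
    _ ≤ (ℬ.K : ℝ≥0∞) * ∑' D : 𝒟,
          (∫⁻ x in (D : Set X), (‖f x‖₊ : ℝ≥0∞) ^ r ∂μ) ^ (ϱ/ρ) / lam ^ (1/ρ) :=
        mul_le_mul_right (ENNReal.tsum_le_tsum fun D => (hball _ (h𝒟C _ D.2)).2.1) _
    _ = (ℬ.K : ℝ≥0∞) *
          ((∑' D : 𝒟, (∫⁻ x in (D : Set X), (‖f x‖₊ : ℝ≥0∞) ^ r ∂μ) ^ (ϱ/ρ)) *
            (lam ^ (1/ρ))⁻¹) := by
        simp only [div_eq_mul_inv, ENNReal.tsum_mul_right]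
    _ ≤ (ℬ.K : ℝ≥0∞) * (I ^ (ϱ/ρ) * (lam ^ (1/ρ))⁻¹) :=
        mul_le_mul_right (mul_le_mul_left hsum_rpow _) _
    _ = (ℬ.K : ℝ≥0∞) / lam ^ (1/ρ) * I ^ (ϱ/ρ) := by
        rw [ENNReal.div_eq_inv_mul]; ring
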